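/- For σ > 0 and β < 0, the function D''(ω) determining Grillakis–Shatah–Strauss stability satisfies: D''(ω) = M'(ω) > 0 for ω ∈ (ω̃, ω̄) and D''(ω) = M'(ω) < 0 for ω > ω̄, where M(ω) = (1/(4πω))·(-(log(√ω/2)+γ)/(2πβ))^(1/σ), ω̃ = 4e^(-2γ), ω̄ = 4e^(-2γ+1/σ). -/

import Mathlib

noncomputable section
open Real Filter Set Topology

/-- The Euler–Mascheroni constant. -/
def euγ : ℝ := Real.eulerMascheroniConstant

/-- The threshold frequency. -/
def ωtilde : ℝ := 4 * Real.exp (-2 * euγ)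

/-- The charge of the standing wave at frequency ω. -/
def charge (σ β ω : ℝ) : ℝ :=
  (-(Real.log (Real.sqrt ω / 2) + euγ) / (2 * π * β)) ^ (1 / (2 * σ))

/-- The inverse change of variables, frequency as a function of the charge. -/
def ωof (σ β q : ℝ) : ℝ := 4 * Real.exp (-2 * euγ - 4 * π * β * q ^ (2 * σ))

/-- Energy of the standing wave as a function of the frequency. -/
def Eω (σ β ω : ℝ) : ℝ :=
  (σ * (Real.log (Real.sqrt ω / 2) + euγ) / (2 * π * (σ + 1)) - 1 / (4 * π)) *
    (-(Real.log (Real.sqrt ω / 2) + euγ) / (2 * π * β)) ^ (1 / σ)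

/-- Energy of the standing wave as a function of the charge. -/
def Echarge (σ β q : ℝ) : ℝ := -q ^ 2 / (4 * π) - σ * β * q ^ (2 * σ + 2) / (σ + 1)

/-- Mass of the standing wave as a function of the frequency. -/
def Mω (σ β ω : ℝ) : ℝ :=
  (1 / (4 * π * ω)) * (-(Real.log (Real.sqrt ω / 2) + euγ) / (2 * π * β)) ^ (1 / σ)

/-- Mass of the standing wave as a function of the charge. -/
def Mq (σ β q : ℝ) : ℝ := q ^ 2 * Real.exp (2 * euγ + 4 * π * β * q ^ (2 * σ)) / (16 * π)

/-- The minimizing charge. -/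
def qbar (σ β : ℝ) : ℝ := (-(4 * π * σ * β)) ^ (-(1 / (2 * σ)) : ℝ)

/-- The blow-up energy threshold. -/
def Λ (σ β : ℝ) : ℝ := -σ / (4 * π * (σ + 1) * (-(4 * π * σ * β)) ^ (1 / σ))

/-- The frequency of minimal energy / maximal mass. -/
def ωbar (σ : ℝ) : ℝ := 4 * Real.exp (-2 * euγ + 1 / σ)

/-- The maximal mass. -/
def μbar (σ β : ℝ) : ℝ :=
  Real.exp (2 * euγ - 1 / σ) / (16 * π * (-(4 * π * σ * β)) ^ (1 / σ))


lemma Mω_hasDerivAt (σ β ω : ℝ) (hσ : 0 < σ) (hβ : β < 0) (hω : ωtilde < ω) :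
    HasDerivAt (Mω σ β)
      (((Real.log ω / 2 - Real.log 2 + euγ) * (-(2 * π * β))⁻¹) ^ (1 / σ - 1) *
        ((1 / (2 * σ) - (Real.log ω / 2 - Real.log 2 + euγ)) *
          ((-(2 * π * β))⁻¹ / (4 * π * ω ^ 2)))) ω := by
  have hπ := Real.pi_pos
  have hω0 : (0:ℝ) < ω := lt_trans (by unfold ωtilde; positivity) hω
  have hlog : Real.log ωtilde = 2 * Real.log 2 - 2 * euγ := by
    unfold ωtilde
    rw [Real.log_mul (by norm_num) (Real.exp_ne_zero _), Real.log_exp,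
      show (4:ℝ) = 2 ^ 2 by norm_num, Real.log_pow]
    push_cast; ring
  have ht : 0 < Real.log ω / 2 - Real.log 2 + euγ := by
    have := Real.log_lt_log (by unfold ωtilde; positivity) hω
    rw [hlog] at this; linarith
  set t := Real.log ω / 2 - Real.log 2 + euγ with htdef
  have hc : (0:ℝ) < (-(2 * π * β))⁻¹ := by
    have : (0:ℝ) < -(2 * π * β) := by nlinarith
    exact inv_pos.mpr this
  have hu : 0 < t * (-(2 * π * β))⁻¹ := mul_pos ht hc
  have h1 : HasDerivAt (fun x => Real.log x / 2 - Real.log 2 + euγ) (ω⁻¹ / 2) ω := by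
    exact (((Real.hasDerivAt_log hω0.ne').div_const 2).sub_const _).add_const _
  have h2 : HasDerivAt (fun x => (Real.log x / 2 - Real.log 2 + euγ) * (-(2 * π * β))⁻¹)
      (ω⁻¹ / 2 * (-(2 * π * β))⁻¹) ω := h1.mul_const _
  have h3 := h2.rpow_const (p := 1 / σ) (Or.inl hu.ne')
  have h4 : HasDerivAt (fun x : ℝ => (4 * π * x)⁻¹) (-(4 * π) / (4 * π * ω) ^ 2) ω := by
    have := ((hasDerivAt_id ω).const_mul (4 * π)).inv (by positivity)
    simp only [mul_one] at this
    exact this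
  have h5 := h4.mul h3
  have heq : Mω σ β =ᶠ[nhds ω] fun x =>
      (4 * π * x)⁻¹ * ((Real.log x / 2 - Real.log 2 + euγ) * (-(2 * π * β))⁻¹) ^ (1 / σ) := by
    filter_upwards [Ioi_mem_nhds hω0] with x hx
    have hx0 : (0:ℝ) < x := hx
    unfold Mω
    rw [Real.log_div (Real.sqrt_pos.mpr hx0).ne' (by norm_num), Real.log_sqrt hx0.le]
    congr 1
    · rw [one_div]
    · congr 1
      field_simp
  have h6 := h5.congr_of_eventuallyEq heq
  refine h6.congr_deriv ?_
  have hexp : (t * (-(2 * π * β))⁻¹) ^ (1 / σ) =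
      (t * (-(2 * π * β))⁻¹) ^ (1 / σ - 1) * (t * (-(2 * π * β))⁻¹) := by
    rw [← Real.rpow_add_one hu.ne' (1 / σ - 1)]; ring_nf
  rw [hexp]
  have hβ0 : β ≠ 0 := hβ.ne
  rw [← htdef]
  field_simp
  ring

lemma log_ωbar (σ : ℝ) : Real.log (ωbar σ) = 2 * Real.log 2 - 2 * euγ + 1 / σ := by
  unfold ωbar
  rw [Real.log_mul (by norm_num) (Real.exp_ne_zero _), Real.log_exp,
    show (4:ℝ) = 2 ^ 2 by norm_num, Real.log_pow]
  push_cast; ring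

lemma ωtilde_lt_ωbar (σ : ℝ) (hσ : 0 < σ) : ωtilde < ωbar σ := by
  unfold ωtilde ωbar
  have : (-2 * euγ : ℝ) < -2 * euγ + 1 / σ := by
    have : (0:ℝ) < 1 / σ := by positivity
    linarith
  nlinarith [Real.exp_lt_exp.mpr this, Real.exp_pos (-2 * euγ)]

theorem stmt13 (σ β : ℝ) (hσ : 0 < σ) (hβ : β < 0) :
    (∀ ω ∈ Set.Ioo ωtilde (ωbar σ), 0 < deriv (Mω σ β) ω) ∧
    (∀ ω > ωbar σ, deriv (Mω σ β) ω < 0) := by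
  have hπ := Real.pi_pos
  have hc : (0:ℝ) < (-(2 * π * β))⁻¹ := by
    have : (0:ℝ) < -(2 * π * β) := by nlinarith
    exact inv_pos.mpr this
  constructor
  · rintro ω ⟨hω1, hω2⟩
    have hω0 : (0:ℝ) < ω := lt_trans (by unfold ωtilde; positivity) hω1
    rw [(Mω_hasDerivAt σ β ω hσ hβ hω1).deriv]
    have ht : 0 < Real.log ω / 2 - Real.log 2 + euγ := by
      have := Real.log_lt_log (by unfold ωtilde; positivity) hω1
      rw [show Real.log ωtilde = 2 * Real.log 2 - 2 * euγ by
        unfold ωtilde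
        rw [Real.log_mul (by norm_num) (Real.exp_ne_zero _), Real.log_exp,
          show (4:ℝ) = 2 ^ 2 by norm_num, Real.log_pow]
        push_cast; ring] at this
      linarith
    have ht2 : Real.log ω / 2 - Real.log 2 + euγ < 1 / (2 * σ) := by
      have := Real.log_lt_log hω0 hω2
      rw [log_ωbar] at this
      have h1 : 1 / (2 * σ) = (1 / σ) / 2 := by rw [one_div, one_div, mul_comm, mul_inv]; ring
      rw [h1]; linarith
    have hA : (0:ℝ) < ((Real.log ω / 2 - Real.log 2 + euγ) * (-(2 * π * β))⁻¹) ^ (1 / σ - 1) :=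
      Real.rpow_pos_of_pos (mul_pos ht hc) _
    have hB : (0:ℝ) < 1 / (2 * σ) - (Real.log ω / 2 - Real.log 2 + euγ) := by linarith
    have hC : (0:ℝ) < (-(2 * π * β))⁻¹ / (4 * π * ω ^ 2) := by positivity
    exact mul_pos hA (mul_pos hB hC)
  · intro ω hω
    have hω1 : ωtilde < ω := lt_trans (ωtilde_lt_ωbar σ hσ) hω
    have hω0 : (0:ℝ) < ω := lt_trans (by unfold ωtilde; positivity) hω1
    rw [(Mω_hasDerivAt σ β ω hσ hβ hω1).deriv]
    have ht : 0 < Real.log ω / 2 - Real.log 2 + euγ := by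
      have := Real.log_lt_log (by unfold ωtilde; positivity) hω1
      rw [show Real.log ωtilde = 2 * Real.log 2 - 2 * euγ by
        unfold ωtilde
        rw [Real.log_mul (by norm_num) (Real.exp_ne_zero _), Real.log_exp,
          show (4:ℝ) = 2 ^ 2 by norm_num, Real.log_pow]
        push_cast; ring] at this
      linarith
    have ht2 : 1 / (2 * σ) < Real.log ω / 2 - Real.log 2 + euγ := by
      have := Real.log_lt_log (by unfold ωbar; positivity) hω
      rw [log_ωbar] at this
      have h1 : 1 / (2 * σ) = (1 / σ) / 2 := by rw [one_div, one_div, mul_comm, mul_inv]; ring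
      rw [h1]; linarith
    have hA : (0:ℝ) < ((Real.log ω / 2 - Real.log 2 + euγ) * (-(2 * π * β))⁻¹) ^ (1 / σ - 1) :=
      Real.rpow_pos_of_pos (mul_pos ht hc) _
    have hB : 1 / (2 * σ) - (Real.log ω / 2 - Real.log 2 + euγ) < 0 := by linarith
    have hC : (0:ℝ) < (-(2 * π * β))⁻¹ / (4 * π * ω ^ 2) := by positivity
    exact mul_neg_of_pos_of_neg hA (mul_neg_of_neg_of_pos hB hC)
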